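/- Let w = ℓ₁ℓ₂⋯ℓ_k and w' = ℓ'₁ℓ'₂⋯ℓ'_{k'} be the canonical factorizations of two nonempty words, and suppose that w is not a prefix of w'. Then w < w' if and only if there exists an index a with 1 ≤ a ≤ min(k, k') such that ℓ_b = ℓ'_b for all 1 ≤ b < a and ℓ_a < ℓ'_a. -/

import Mathlib

variable {I : Type*} [LinearOrder I]

/-- A word is *Lyndon* if it is nonempty and lexicographically strictly smaller
than each of its proper nonempty suffixes. -/
def IsLyndon (w : List I) : Prop :=
  w ≠ [] ∧ ∀ u v : List I, w = u ++ v → u ≠ [] → v ≠ [] → w < v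

/-- `fs` is the canonical (Chen–Fox–Lyndon) factorization of `w`:
a weakly decreasing list of Lyndon words whose concatenation is `w`. -/
def IsCFLFactorization (w : List I) (fs : List (List I)) : Prop :=
  fs.flatten = w ∧ (∀ f ∈ fs, IsLyndon f) ∧ fs.Chain' (· ≥ ·)

section MelanconAux

lemma mel_nil_lt_of_ne {t : List I} (ht : t ≠ []) : ([] : List I) < t := by
  cases t with
  | nil => exact absurd rfl ht
  | cons a l => exact List.nil_lt_cons a l

lemma mel_lt_of_prefix_ne {u v : List I} (h : u <+: v) (hne : u ≠ v) : u < v := by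
  obtain ⟨t, rfl⟩ := h
  have ht : t ≠ [] := by rintro rfl; simp at hne
  have h0 : List.Lex (· < ·) ([] : List I) t := mel_nil_lt_of_ne ht
  simpa using List.Lex.append_left (· < ·) h0 u

lemma mel_le_of_prefix {u v : List I} (h : u <+: v) : u ≤ v := by
  by_cases he : u = v
  · exact le_of_eq he
  · exact le_of_lt (mel_lt_of_prefix_ne h he)

lemma mel_lex_append_of_not_prefix :
    ∀ {u v : List I}, List.Lex (· < ·) u v → ¬ u <+: v → ∀ x,
      List.Lex (· < ·) (u ++ x) v
  | _, _, .nil, hp, _ => absurd List.nil_prefix hp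
  | _, _, .cons h, hp, x =>
      .cons (mel_lex_append_of_not_prefix h
        (fun hpre => hp (List.cons_prefix_cons.mpr ⟨rfl, hpre⟩)) x)
  | _, _, .rel h, _, _ => .rel h

lemma mel_lt_append_left {u v : List I} (p : List I) (h : u < v) : p ++ u < p ++ v :=
  List.Lex.append_left (· < ·) h p

/-- Key lemma: a concatenation of words all `≤ ℓ`, with `ℓ` a prefix of a
Lyndon word `L`, is smaller than any nonempty proper suffix `t` of `L`. -/
lemma mel_flatten_lt_suffix (L ℓ : List I) (hL : IsLyndon L) (hℓ : ℓ <+: L) :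
    ∀ (gs : List (List I)), (∀ g ∈ gs, g ≤ ℓ) →
    ∀ (t p : List I), p ≠ [] → t ≠ [] → L = p ++ t → gs.flatten < t := by
  intro gs
  induction gs with
  | nil =>
    intro _ t p hp ht hL'
    simpa using mel_nil_lt_of_ne ht
  | cons g gs ih =>
    intro hall t p hp ht hLpt
    have hgle : g ≤ ℓ := hall g (by simp)
    have hLt : L < t := hL.2 p t hLpt hp ht
    have hlt2 : g < t := lt_of_le_of_lt (hgle.trans (mel_le_of_prefix hℓ)) hLt
    by_cases hgp : g <+: t
    · obtain ⟨s, rfl⟩ := hgp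
      have hs : s ≠ [] := by
        rintro rfl
        rw [List.append_nil] at hlt2
        exact lt_irrefl g hlt2
      have hrec : gs.flatten < s :=
        ih (fun g' hg' => hall g' (by simp [hg'])) s (p ++ g) (by simp [hp]) hs
          (by rw [hLpt, List.append_assoc])
      simpa [List.flatten_cons] using mel_lt_append_left g hrec
    · have : List.Lex (· < ·) (g ++ gs.flatten) t :=
        mel_lex_append_of_not_prefix hlt2 hgp gs.flatten
      simpa [List.flatten_cons] using this

lemma mel_lt_of_factor_lt (fs fs' : List (List I))
    (hlyn : ∀ f ∈ fs, IsLyndon f) (hch : fs.Chain' (· ≥ ·))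
    (hlyn' : ∀ f ∈ fs', IsLyndon f)
    (a : ℕ) (ha : a < fs.length) (ha' : a < fs'.length)
    (htake : fs.take a = fs'.take a)
    (hlt : fs.get ⟨a, ha⟩ < fs'.get ⟨a, ha'⟩) :
    fs.flatten < fs'.flatten := by
  set ℓ := fs.get ⟨a, ha⟩ with hℓdef
  set ℓ' := fs'.get ⟨a, ha'⟩ with hℓ'def
  have hdrop : fs.drop a = ℓ :: fs.drop (a + 1) := by
    rw [hℓdef, List.get_eq_getElem]
    exact List.drop_eq_getElem_cons ha
  have hdrop' : fs'.drop a = ℓ' :: fs'.drop (a + 1) := by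
    rw [hℓ'def, List.get_eq_getElem]
    exact List.drop_eq_getElem_cons ha'
  have hsplit : fs.flatten = (fs.take a).flatten ++ (ℓ ++ (fs.drop (a + 1)).flatten) := by
    conv_lhs => rw [← List.take_append_drop a fs]
    rw [List.flatten_append, hdrop, List.flatten_cons]
  have hsplit' : fs'.flatten = (fs'.take a).flatten ++ (ℓ' ++ (fs'.drop (a + 1)).flatten) := by
    conv_lhs => rw [← List.take_append_drop a fs']
    rw [List.flatten_append, hdrop', List.flatten_cons]
  rw [hsplit, hsplit', ← htake]
  apply mel_lt_append_left
  set R := (fs.drop (a + 1)).flatten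
  set R' := (fs'.drop (a + 1)).flatten
  by_cases hpre : ℓ <+: ℓ'
  · obtain ⟨t, hℓ't⟩ := hpre
    have ht : t ≠ [] := by
      rintro rfl
      rw [List.append_nil] at hℓ't
      rw [hℓ't] at hlt
      exact lt_irrefl _ hlt
    have hlynℓ' : IsLyndon ℓ' := hlyn' ℓ' (by rw [hℓ'def]; exact List.get_mem _ _)
    have hℓne : ℓ ≠ [] := (hlyn ℓ (by rw [hℓdef]; exact List.get_mem _ _)).1
    -- all later factors of fs are ≤ ℓ
    have hall : ∀ g ∈ fs.drop (a + 1), g ≤ ℓ := by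
      have hpw : fs.Pairwise (· ≥ ·) := List.isChain_iff_pairwise.mp hch
      have hpw2 : (fs.drop a).Pairwise (· ≥ ·) :=
        hpw.sublist (List.drop_sublist a fs)
      rw [hdrop] at hpw2
      exact fun g hg => (List.pairwise_cons.mp hpw2).1 g hg
    have hRt : R < t :=
      mel_flatten_lt_suffix ℓ' ℓ hlynℓ' ⟨t, hℓ't⟩ _ hall t ℓ hℓne ht hℓ't.symm
    have hRtR' : R < t ++ R' := List.Lex.append_right (· < ·) R' hRt
    calc ℓ ++ R < ℓ ++ (t ++ R') := mel_lt_append_left ℓ hRtR'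
      _ = ℓ' ++ R' := by rw [← hℓ't, List.append_assoc]
  · have h1 : List.Lex (· < ·) (ℓ ++ R) ℓ' :=
      mel_lex_append_of_not_prefix hlt hpre R
    exact List.Lex.append_right (· < ·) R' h1

lemma mel_first_diff {α : Type*} : ∀ (xs ys : List α), xs <+: ys ∨ ys <+: xs ∨
    ∃ a, ∃ (ha : a < xs.length) (ha' : a < ys.length),
      xs.take a = ys.take a ∧ xs.get ⟨a, ha⟩ ≠ ys.get ⟨a, ha'⟩
  | [], ys => Or.inl List.nil_prefix
  | x :: xs, [] => Or.inr (Or.inl List.nil_prefix)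
  | x :: xs, y :: ys => by
    by_cases hxy : x = y
    · subst hxy
      rcases mel_first_diff xs ys with h | h | ⟨a, ha, ha', hta, hne⟩
      · exact Or.inl (List.cons_prefix_cons.mpr ⟨rfl, h⟩)
      · exact Or.inr (Or.inl (List.cons_prefix_cons.mpr ⟨rfl, h⟩))
      · refine Or.inr (Or.inr ⟨a + 1, Nat.succ_lt_succ ha, Nat.succ_lt_succ ha', ?_, ?_⟩)
        · simp [hta]
        · simpa using hne
    · exact Or.inr (Or.inr ⟨0, Nat.succ_pos _, Nat.succ_pos _, rfl, hxy⟩)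

lemma mel_flatten_prefix {α : Type*} {xs ys : List (List α)} (h : xs <+: ys) :
    xs.flatten <+: ys.flatten := by
  obtain ⟨r, rfl⟩ := h
  rw [List.flatten_append]
  exact List.prefix_append _ _

end MelanconAux

/-- Melançon's lemma: for canonical factorizations `w = ℓ₁⋯ℓ_k` and
`w' = ℓ'₁⋯ℓ'_{k'}` such that `w` is not a prefix of `w'`, one has `w < w'`
iff there is an index `a` (`0`-based, `a < min(k,k')`) with the first `a`
factors equal and `ℓ_a < ℓ'_a`. -/
theorem melancon_lt_iff (w w' : List I) (fs fs' : List (List I))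
    (hw : w ≠ []) (hw' : w' ≠ [])
    (h : IsCFLFactorization w fs) (h' : IsCFLFactorization w' fs')
    (hpre : ¬ w <+: w') :
    w < w' ↔ ∃ (a : ℕ) (ha : a < fs.length) (ha' : a < fs'.length),
      fs.take a = fs'.take a ∧ fs.get ⟨a, ha⟩ < fs'.get ⟨a, ha'⟩ := by
  obtain ⟨hf, hlyn, hch⟩ := h
  obtain ⟨hf', hlyn', hch'⟩ := h'
  subst hf hf'
  constructor
  · intro hlt
    rcases mel_first_diff fs fs' with hp | hp | ⟨a, ha, ha', hta, hne⟩
    · exact absurd (mel_flatten_prefix hp) hpre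
    · exact absurd hlt (not_lt_of_ge (mel_le_of_prefix (mel_flatten_prefix hp)))
    · rcases lt_trichotomy (fs.get ⟨a, ha⟩) (fs'.get ⟨a, ha'⟩) with h1 | h1 | h1
      · exact ⟨a, ha, ha', hta, h1⟩
      · exact absurd h1 hne
      · exact absurd (mel_lt_of_factor_lt fs' fs hlyn' hch' hlyn a ha' ha hta.symm h1)
          (lt_asymm hlt)
  · rintro ⟨a, ha, ha', hta, h1⟩
    exact mel_lt_of_factor_lt fs fs' hlyn hch hlyn' a ha ha' hta h1
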